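/- Let a ≤ b ≤ c be real and λ_− = (a+b+c)/3 − (√2/3)·√(3(a²+b²+c²) − (a+b+c)²). If λ_− + a + b + (1/3)c ≥ 0, then a + b ≥ 0 (nonnegative Ricci curvature). -/
import Mathlib


theorem stmt7 (a b c : ℝ) (hab : a ≤ b) (hbc : b ≤ c)
    (h : ((a + b + c) / 3
        - Real.sqrt 2 / 3 * Real.sqrt (3 * (a^2 + b^2 + c^2) - (a + b + c)^2))
      + a + b + (1 / 3) * c ≥ 0) :
    a + b ≥ 0 := by
  set Q : ℝ := 3 * (a^2 + b^2 + c^2) - (a + b + c)^2 with hQ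
  have hQ0 : 0 ≤ Q := by nlinarith [sq_nonneg (a - b), sq_nonneg (b - c), sq_nonneg (c - a)]
  have hs : Real.sqrt 2 * Real.sqrt Q = Real.sqrt (2 * Q) := (Real.sqrt_mul (by norm_num) Q).symm
  have hle : Real.sqrt (2 * Q) ≤ 4 * a + 4 * b + 2 * c := by
    rw [← hs]; nlinarith [Real.sqrt_nonneg Q, Real.sqrt_nonneg (2:ℝ)]
  have hnn : 0 ≤ 4 * a + 4 * b + 2 * c := le_trans (Real.sqrt_nonneg _) hle
  have hsq : 2 * Q ≤ (4 * a + 4 * b + 2 * c)^2 := by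
    nlinarith [Real.sq_sqrt (by positivity : (0:ℝ) ≤ 2 * Q), Real.sqrt_nonneg (2 * Q)]
  by_contra hc
  push_neg at hc
  nlinarith [sq_nonneg (a - b), sq_nonneg (a + b), mul_nonneg hnn (le_of_lt (neg_pos.mpr hc))]
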